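/- Given nonparallel e, ē ∈ S² with λ := e·ē, and s, t ∈ [−1,1] satisfying s² + t² − 2λst + λ² − 1 < 0, there exists p ∈ S² with p·e = s and p·ē = t. -/

import Mathlib

set_option maxHeartbeats 1000000 in

theorem exists_point_with_dots (e ebar : EuclideanSpace ℝ (Fin 3))
    (he : ‖e‖ = 1) (hebar : ‖ebar‖ = 1) (lam s t : ℝ) (hlam : lam = inner ℝ e ebar)
    (hlam1 : |lam| < 1) (hs : s ∈ Set.Icc (-1 : ℝ) 1) (ht : t ∈ Set.Icc (-1 : ℝ) 1)
    (hineq : s ^ 2 + t ^ 2 - 2 * lam * s * t + lam ^ 2 - 1 < 0) :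
    ∃ p : EuclideanSpace ℝ (Fin 3), ‖p‖ = 1 ∧ (inner ℝ p e : ℝ) = s ∧ (inner ℝ p ebar : ℝ) = t := by
  classical
  -- get a unit vector orthogonal to both e and ebar
  obtain ⟨w, hw0, hwe, hweb⟩ : ∃ w : EuclideanSpace ℝ (Fin 3),
      w ≠ 0 ∧ (inner ℝ w e : ℝ) = 0 ∧ (inner ℝ w ebar : ℝ) = 0 := by
    have hsp : Module.finrank ℝ (Submodule.span ℝ ({e, ebar} : Set (EuclideanSpace ℝ (Fin 3)))) ≤ 2 := by
      have h := finrank_span_le_card (R := ℝ) ({e, ebar} : Set (EuclideanSpace ℝ (Fin 3)))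
      refine h.trans ?_
      rw [Set.toFinset_insert, Set.toFinset_singleton]
      exact (Finset.card_insert_le _ _).trans (by simp)
    have h3 : Module.finrank ℝ (EuclideanSpace ℝ (Fin 3)) = 3 := by simp
    have hsum := Submodule.finrank_add_finrank_orthogonal
      (Submodule.span ℝ ({e, ebar} : Set (EuclideanSpace ℝ (Fin 3))))
    rw [h3] at hsum
    have hK : 0 < Module.finrank ℝ (Submodule.span ℝ ({e, ebar} : Set (EuclideanSpace ℝ (Fin 3))))ᗮ := by
      omega
    obtain ⟨⟨w, hwK⟩, hw0⟩ := Module.finrank_pos_iff_exists_ne_zero.mp hK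
    have h1 := (Submodule.mem_orthogonal _ w).mp hwK e (Submodule.subset_span (by simp))
    have h2 := (Submodule.mem_orthogonal _ w).mp hwK ebar (Submodule.subset_span (by simp))
    exact ⟨w, by simpa using hw0, by rw [real_inner_comm]; exact h1, by rw [real_inner_comm]; exact h2⟩
  set w' : EuclideanSpace ℝ (Fin 3) := (‖w‖)⁻¹ • w with hw'
  have hwnorm : ‖w'‖ = 1 := by
    rw [hw', norm_smul, norm_inv, norm_norm, inv_mul_cancel₀ (norm_ne_zero_iff.mpr hw0)]
  have hw'e : (inner ℝ w' e : ℝ) = 0 := by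
    rw [hw', real_inner_smul_left, hwe, mul_zero]
  have hw'eb : (inner ℝ w' ebar : ℝ) = 0 := by
    rw [hw', real_inner_smul_left, hweb, mul_zero]
  have hd : (0:ℝ) < 1 - lam ^ 2 := by nlinarith [abs_nonneg lam, sq_abs lam, hlam1]
  have hNpos : (0:ℝ) < 1 - lam ^ 2 - s ^ 2 - t ^ 2 + 2 * lam * s * t := by nlinarith
  set α : ℝ := (s - lam * t) / (1 - lam ^ 2) with hα
  set β : ℝ := (t - lam * s) / (1 - lam ^ 2) with hβ
  set c : ℝ := Real.sqrt ((1 - lam ^ 2 - s ^ 2 - t ^ 2 + 2 * lam * s * t) / (1 - lam ^ 2)) with hc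
  have hc2 : c ^ 2 = (1 - lam ^ 2 - s ^ 2 - t ^ 2 + 2 * lam * s * t) / (1 - lam ^ 2) :=
    Real.sq_sqrt (le_of_lt (div_pos hNpos hd))
  have hcc : c * c * (1 - lam ^ 2) = 1 - lam ^ 2 - s ^ 2 - t ^ 2 + 2 * lam * s * t := by
    rw [← sq, hc2, div_mul_cancel₀ _ hd.ne']
  have hbe : (inner ℝ ebar e : ℝ) = lam := by rw [real_inner_comm]; exact hlam.symm
  have heb : (inner ℝ e ebar : ℝ) = lam := hlam.symm
  refine ⟨α • e + β • ebar + c • w', ?_, ?_, ?_⟩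
  · -- norm 1
    have hee : (inner ℝ e e : ℝ) = 1 := by
      rw [real_inner_self_eq_norm_sq, he]; norm_num
    have hbb : (inner ℝ ebar ebar : ℝ) = 1 := by
      rw [real_inner_self_eq_norm_sq, hebar]; norm_num
    have hww : (inner ℝ w' w' : ℝ) = 1 := by
      rw [real_inner_self_eq_norm_sq, hwnorm]; norm_num
    have hself : (inner ℝ (α • e + β • ebar + c • w') (α • e + β • ebar + c • w') : ℝ) = 1 := by
      simp only [inner_add_left, inner_add_right, real_inner_smul_left, real_inner_smul_right,
        hee, hbb, hww, hw'e, hw'eb, real_inner_comm w' e, real_inner_comm w' ebar, hbe, heb]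
      rw [hα, hβ]
      field_simp
      linear_combination (1 - lam ^ 2) * hcc
    have hn2 : ‖α • e + β • ebar + c • w'‖ ^ 2 = 1 := by
      rw [← real_inner_self_eq_norm_sq]; exact hself
    nlinarith [norm_nonneg (α • e + β • ebar + c • w')]
  · simp only [inner_add_left, real_inner_smul_left, real_inner_self_eq_norm_sq, he, hw'e, hbe]
    rw [hα, hβ]
    field_simp
    ring
  · simp only [inner_add_left, real_inner_smul_left, real_inner_self_eq_norm_sq, hebar, hw'eb, heb]
    rw [hα, hβ]
    field_simp
    ring
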